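/- Define F(x,y) := 2·⟨x,y⟩/( ‖x‖²·‖y‖² ) for nonzero vectors x, y ∈ ℝ². For all x, y ∈ ℝ² with x ≠ 0, y ≠ 0 and x + y ≠ 0, the telescoping identity F(x,y) − F(x+y, y) − F(x, x+y) = −4·det(x,y)² / ( ‖x‖²·‖y‖²·‖x+y‖² ) holds, where det((a,b),(c,d)) = a·d − b·c. -/
import Mathlib


/-- `F(x,y) = 2⟨x,y⟩/(‖x‖²‖y‖²)` for vectors in `ℝ²`. -/
noncomputable def F (x y : ℝ × ℝ) : ℝ :=
  2 * (x.1 * y.1 + x.2 * y.2) / ((x.1 ^ 2 + x.2 ^ 2) * (y.1 ^ 2 + y.2 ^ 2))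

theorem stmt_9 (x y : ℝ × ℝ) (hx : x ≠ 0) (hy : y ≠ 0) (hxy : x + y ≠ 0) :
    F x y - F (x + y) y - F x (x + y) =
      -4 * (x.1 * y.2 - x.2 * y.1) ^ 2 /
        ((x.1 ^ 2 + x.2 ^ 2) * (y.1 ^ 2 + y.2 ^ 2) *
          ((x + y).1 ^ 2 + (x + y).2 ^ 2)) := by
  obtain ⟨a, b⟩ := x
  obtain ⟨c, d⟩ := y
  have h1 : a ^ 2 + b ^ 2 ≠ 0 := by
    intro h
    apply hx
    have ha : a = 0 := by nlinarith [sq_nonneg a, sq_nonneg b]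
    have hb : b = 0 := by nlinarith [sq_nonneg a, sq_nonneg b]
    simp [Prod.ext_iff, ha, hb]
  have h2 : c ^ 2 + d ^ 2 ≠ 0 := by
    intro h
    apply hy
    have hc : c = 0 := by nlinarith [sq_nonneg c, sq_nonneg d]
    have hd : d = 0 := by nlinarith [sq_nonneg c, sq_nonneg d]
    simp [Prod.ext_iff, hc, hd]
  have h3 : (a + c) ^ 2 + (b + d) ^ 2 ≠ 0 := by
    intro h
    apply hxy
    have hc : a + c = 0 := by nlinarith [sq_nonneg (a+c), sq_nonneg (b+d)]
    have hd : b + d = 0 := by nlinarith [sq_nonneg (a+c), sq_nonneg (b+d)]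
    simp [Prod.ext_iff, Prod.mk_add_mk, hc, hd]
  simp only [F, Prod.mk_add_mk]
  field_simp
  ring
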